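/- For a finite group G in which every element g has order γ_g, and a subset Ω of G closed under invertible powering and under conjugation, the quantity β(F,Ω) := Σ_{id ≠ h ∈ Ω} c(h)/[ℚ(ζ_{γ_h}) : ℚ] is a non-negative integer, where c(h) is the number of conjugates of h and [ℚ(ζ_n) : ℚ] = φ(n). -/

import Mathlib

open Subgroup

private lemma conj_zpow_mem {G : Type*} [Group G] {g h x : G} {a : ℤ} (ha : g ^ a = h)
    (hx : IsConj g x) : IsConj h (x ^ a) := by
  obtain ⟨c, hc⟩ := isConj_iff.1 hx
  exact isConj_iff.2 ⟨c, by rw [← ha, ← hc, conj_zpow]⟩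

private lemma zpow_fix {G : Type*} [Group G] {g x : G} {n : ℤ} (hg : g ^ n = g)
    (hx : IsConj g x) : x ^ n = x := by
  obtain ⟨c, hc⟩ := isConj_iff.1 hx
  have h1 : g ^ (n - 1) = 1 := by
    rw [zpow_sub, hg, zpow_one, mul_inv_cancel]
  have h2 : x ^ (n - 1) = 1 := by
    rw [← hc, conj_zpow, h1, mul_one, mul_inv_cancel]
  calc x ^ n = x ^ (n - 1 + 1) := by ring_nf
    _ = x ^ (n-1) * x ^ (1:ℤ) := zpow_add x _ _
    _ = x := by rw [h2, one_mul, zpow_one]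

private lemma conj_card_eq {G : Type*} [Group G] {g h : G} {a b : ℤ} (ha : g ^ a = h)
    (hb : h ^ b = g) :
    Nat.card {x : G // IsConj g x} = Nat.card {x : G // IsConj h x} := by
  have hab : g ^ (a * b) = g := by rw [zpow_mul, ha, hb]
  have hba : h ^ (b * a) = h := by rw [zpow_mul, hb, ha]
  exact Nat.card_congr
    { toFun := fun x => ⟨x.1 ^ a, conj_zpow_mem ha x.2⟩
      invFun := fun y => ⟨y.1 ^ b, conj_zpow_mem hb y.2⟩
      left_inv := fun x => Subtype.ext <| by
        simp only [← zpow_mul]; exact zpow_fix hab x.2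
      right_inv := fun y => Subtype.ext <| by
        simp only [← zpow_mul]; exact zpow_fix hba y.2 }

private lemma zpowers_eq {G : Type*} [Group G] {g h : G} {a b : ℤ} (ha : g ^ a = h)
    (hb : h ^ b = g) : zpowers g = zpowers h :=
  le_antisymm (zpowers_le.2 ⟨b, hb⟩) (zpowers_le.2 ⟨a, ha⟩)

private lemma sum_nat_cast {ι : Type*} (s : Finset ι) (f : ι → ℚ)
    (h : ∀ i ∈ s, ∃ k : ℕ, f i = (k : ℚ)) : ∃ k : ℕ, ∑ i ∈ s, f i = (k : ℚ) := by
  classical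
  induction s using Finset.induction with
  | empty => exact ⟨0, by simp⟩
  | insert _ _ hni ih =>
    rename_i i s
    obtain ⟨k, hk⟩ := h i (Finset.mem_insert_self i s)
    obtain ⟨m, hm⟩ := ih (fun j hj => h j (Finset.mem_insert_of_mem hj))
    exact ⟨k + m, by rw [Finset.sum_insert hni, hk, hm]; push_cast; ring⟩

/-- For a finite group `G` and a subset `Ω ⊆ G` closed under invertible powering and under
conjugation, the quantity `β(F,Ω) = Σ_{id ≠ h ∈ Ω} c(h)/φ(γ_h)` is a non-negative integer,
where `c(h)` is the number of conjugates of `h`, `γ_h` the order of `h`, and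
`[ℚ(ζ_n):ℚ] = φ(n)`. -/
theorem stmt13 {G : Type*} [Group G] [Fintype G] [DecidableEq G] (Ω : Finset G)
    (hpow : ∀ g h : G, (∃ a : ℤ, g ^ a = h) → (∃ b : ℤ, h ^ b = g) → (g ∈ Ω ↔ h ∈ Ω))
    (hconj : ∀ g ∈ Ω, ∀ x : G, x * g * x⁻¹ ∈ Ω) :
    ∃ k : ℕ,
      ∑ h ∈ Ω.erase 1,
        (Nat.card {x : G // IsConj h x} : ℚ) / (Nat.totient (orderOf h) : ℚ) = (k : ℚ) := by
  classical
  set S := Ω.erase 1 with hS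
  set f : G → ℚ := fun h =>
    (Nat.card {x : G // IsConj h x} : ℚ) / (Nat.totient (orderOf h) : ℚ) with hf
  have hmaps : ∀ x ∈ S, (fun h => zpowers h) x ∈ S.image (fun h => zpowers h) :=
    fun x hx => Finset.mem_image_of_mem _ hx
  rw [← Finset.sum_fiberwise_of_maps_to hmaps f]
  apply sum_nat_cast
  intro C hC
  obtain ⟨g, hgS, rfl⟩ := Finset.mem_image.1 hC
  have hg1 : g ≠ 1 := (Finset.mem_erase.1 hgS).1
  have hgΩ : g ∈ Ω := (Finset.mem_erase.1 hgS).2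
  set n := orderOf g with hn
  set c := Nat.card {x : G // IsConj g x} with hc
  -- fiber description
  have hfiber : S.filter (fun h => zpowers h = zpowers g)
      = Finset.univ.filter (fun h => zpowers h = zpowers g) := by
    ext h
    simp only [Finset.mem_filter, Finset.mem_univ, true_and, and_iff_right_iff_imp]
    intro hzp
    have hhg : h ∈ zpowers g := hzp ▸ mem_zpowers h
    have hgh : g ∈ zpowers h := hzp ▸ mem_zpowers g
    obtain ⟨a, ha⟩ := mem_zpowers_iff.1 hhg
    obtain ⟨b, hb⟩ := mem_zpowers_iff.1 hgh
    rw [hS, Finset.mem_erase]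
    refine ⟨?_, (hpow g h ⟨a, ha⟩ ⟨b, hb⟩).1 hgΩ⟩
    rintro rfl
    exact hg1 (by simpa using (hzp ▸ mem_zpowers g : g ∈ zpowers (1 : G)))
  -- each term in the fiber equals c / φ(n)
  have hterm : ∀ h ∈ S.filter (fun h => zpowers h = zpowers g),
      f h = (c : ℚ) / (Nat.totient n : ℚ) := by
    intro h hh
    have hzp : zpowers h = zpowers g := (Finset.mem_filter.1 hh).2
    obtain ⟨a, ha⟩ := mem_zpowers_iff.1 (hzp ▸ mem_zpowers h : h ∈ zpowers g)
    obtain ⟨b, hb⟩ := mem_zpowers_iff.1 (hzp ▸ mem_zpowers g : g ∈ zpowers h)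
    have hcard : Nat.card {x : G // IsConj h x} = c := (conj_card_eq ha hb).symm
    have hord : orderOf h = n := by
      rw [hn, ← Nat.card_zpowers, ← Nat.card_zpowers, hzp]
    rw [hf]; simp only [hcard, hord]
  -- fiber cardinality is φ(n)
  have hcardfib : (S.filter (fun h => zpowers h = zpowers g)).card = Nat.totient n := by
    rw [hfiber]
    have hcy : IsCyclic (zpowers g) := isCyclic_of_orderOf_eq_card ⟨g, mem_zpowers g⟩ (by rw [Subgroup.orderOf_mk, Nat.card_zpowers])
    have hcard : Fintype.card (zpowers g) = n := Fintype.card_zpowers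
    have := IsCyclic.card_orderOf_eq_totient (α := zpowers g) (d := n)
      (by rw [hcard])
    rw [← this]
    apply Finset.card_bij (fun h hh => (⟨h, by
      have hzp : zpowers h = zpowers g := (Finset.mem_filter.1 hh).2
      exact hzp ▸ mem_zpowers h⟩ : zpowers g))
    · intro h hh
      have hzp : zpowers h = zpowers g := (Finset.mem_filter.1 hh).2
      simp only [Finset.mem_filter, Finset.mem_univ, true_and]
      rw [Subgroup.orderOf_mk, hn, ← Nat.card_zpowers, ← Nat.card_zpowers, hzp]
    · intro h1 hh1 h2 hh2 heq
      exact congrArg Subtype.val heq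
    · rintro ⟨x, hx⟩ hmem
      have hordx : orderOf x = n := by
        have := (Finset.mem_filter.1 hmem).2
        rwa [Subgroup.orderOf_mk] at this
      have hzp : zpowers x = zpowers g := by
        refine Subgroup.eq_of_le_of_card_ge (zpowers_le.2 hx) ?_
        rw [Nat.card_zpowers, Nat.card_zpowers, hordx]
      exact ⟨x, by simp [Finset.mem_filter, hzp], rfl⟩
  rw [Finset.sum_congr rfl hterm, Finset.sum_const, hcardfib]
  refine ⟨c, ?_⟩
  have hpos : (0:ℚ) < Nat.totient n := by
    exact_mod_cast Nat.totient_pos.2 (orderOf_pos g)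
  rw [nsmul_eq_mul]
  field_simp
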